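/- Let (X,d) be a Heine–Borel metric space, p ≥ 1, μ ∈ P_p(X), k ∈ ℕ, and R ⊆ X closed, such that (μ,k,R) is non-singular (i.e., m_{1,p}(μ,R) > ⋯ > m_{k,p}(μ,R)). Then C_p(μ,k,R) is a nonempty compact subset of the space K(X) of nonempty compact subsets of X equipped with the Hausdorff metric. -/

import Mathlib

open Filter MeasureTheory Topology TopologicalSpace Metric Set

set_option linter.unusedSectionVars false
noncomputable section

/-- Kuratowski lower limit of a sequence of sets. -/
def KurLi {Y : Type*} [TopologicalSpace Y] (A : ℕ → Set Y) : Set Y :=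
  {x | ∀ U ∈ nhds x, ∀ᶠ n in atTop, (U ∩ A n).Nonempty}

/-- Kuratowski upper limit of a sequence of sets. -/
def KurLs {Y : Type*} [TopologicalSpace Y] (A : ℕ → Set Y) : Set Y :=
  {x | ∀ U ∈ nhds x, ∃ᶠ n in atTop, (U ∩ A n).Nonempty}

variable {X : Type*} [MetricSpace X] [MeasurableSpace X]

/-- The clustering cost `W_p(S,μ) = ∫ d(y,S)^p dμ(y)`. -/
def Wp (p : ℝ) (S : Set X) (μ : Measure X) : ℝ :=
  ∫ y, infDist y S ^ p ∂μ

/-- `μ` has a finite `p`-th moment. -/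
def FinMom (p : ℝ) (μ : Measure X) : Prop :=
  ∃ x : X, Integrable (fun y => dist x y ^ p) μ

/-- Convergence in the `p`-Wasserstein topology: weak convergence together with
convergence of the `p`-th moments about some point. -/
def WassTendsto (p : ℝ) (μ : ℕ → Measure X) (ν : Measure X) : Prop :=
  (∀ f : BoundedContinuousFunction X ℝ,
      Tendsto (fun n => ∫ y, f y ∂ μ n) atTop (𝓝 (∫ y, f y ∂ ν))) ∧
  ∃ x : X, Tendsto (fun n => ∫ y, dist x y ^ p ∂ μ n) atTop (𝓝 (∫ y, dist x y ^ p ∂ ν))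

/-- `S` is a feasible set of cluster centers: a nonempty finite subset of `R`
with at most `k` points. -/
def Feas (k : ℕ) (R S : Set X) : Prop :=
  S ⊆ R ∧ S.Finite ∧ S.Nonempty ∧ S.ncard ≤ k

/-- The optimal clustering cost `m_{k,p}(μ,R)`. -/
def mCost (p : ℝ) (μ : Measure X) (k : ℕ) (R : Set X) : ℝ :=
  sInf ((fun S => Wp p S μ) '' {S | Feas k R S})

/-- The set of optimal cluster-center sets `C_p(μ,k,R)`, viewed as a subset of the
hyperspace of nonempty compact subsets of `X` with the Hausdorff metric. -/
def Cp (p : ℝ) (μ : Measure X) (k : ℕ) (R : Set X) : Set (NonemptyCompacts X) :=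
  {S | Feas k R (S : Set X) ∧ ∀ T : Set X, Feas k R T → Wp p (S : Set X) μ ≤ Wp p T μ}

/-- The support of a measure on a metric space. -/
def measSupp (μ : Measure X) : Set X :=
  {x | ∀ r : ℝ, 0 < r → μ (Metric.ball x r) ≠ 0}

/-! ### Auxiliary lemmas -/

section Aux

lemma two_rpow_bound {p a b : ℝ} (hp : 0 ≤ p) (ha : 0 ≤ a) (hb : 0 ≤ b) :
    (a + b) ^ p ≤ 2 ^ p * (a ^ p + b ^ p) := by
  have hm : 0 ≤ max a b := le_max_of_le_left ha
  have h1 : a + b ≤ 2 * max a b := by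
    rcases le_total a b with h | h
    · rw [max_eq_right h]; linarith
    · rw [max_eq_left h]; linarith
  calc (a + b) ^ p ≤ (2 * max a b) ^ p :=
        Real.rpow_le_rpow (by linarith) h1 hp
    _ = 2 ^ p * (max a b) ^ p := Real.mul_rpow (by norm_num) hm
    _ ≤ 2 ^ p * (a ^ p + b ^ p) := by
        apply mul_le_mul_of_nonneg_left _ (Real.rpow_nonneg (by norm_num) p)
        rcases le_total a b with h | h
        · rw [max_eq_right h]
          have := Real.rpow_nonneg ha p; linarith
        · rw [max_eq_left h]
          have := Real.rpow_nonneg hb p; linarith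

lemma continuous_rpow_c {p : ℝ} (hp : 0 ≤ p) : Continuous fun t : ℝ => t ^ p :=
  Real.continuous_rpow_const hp

variable [OpensMeasurableSpace X]

lemma integrable_dist_rpow {p : ℝ} (hp : 1 ≤ p) {μ : Measure X} [IsFiniteMeasure μ]
    (hμ : FinMom p μ) (z : X) : Integrable (fun y => dist y z ^ p) μ := by
  obtain ⟨x, hx⟩ := hμ
  have hp0 : (0 : ℝ) ≤ p := by linarith
  have hcont : Continuous fun y : X => dist y z ^ p :=
    (continuous_rpow_c hp0).comp (continuous_id.dist continuous_const)
  refine Integrable.mono' ((hx.add (integrable_const (dist x z ^ p))).const_mul (2 ^ p))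
    hcont.aestronglyMeasurable (ae_of_all _ fun y => ?_)
  simp only [Pi.add_apply]
  rw [Real.norm_eq_abs, abs_of_nonneg (Real.rpow_nonneg dist_nonneg p)]
  calc dist y z ^ p ≤ (dist x y + dist x z) ^ p := by
        refine Real.rpow_le_rpow dist_nonneg ?_ hp0
        rw [dist_comm x y]; exact dist_triangle y x z
    _ ≤ 2 ^ p * (dist x y ^ p + dist x z ^ p) :=
        two_rpow_bound hp0 dist_nonneg dist_nonneg

lemma integrable_infDist_rpow {p : ℝ} (hp : 1 ≤ p) {μ : Measure X} [IsFiniteMeasure μ]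
    (hμ : FinMom p μ) {S : Set X} (hS : S.Nonempty) :
    Integrable (fun y => infDist y S ^ p) μ := by
  obtain ⟨s, hs⟩ := hS
  have hp0 : (0 : ℝ) ≤ p := by linarith
  refine (integrable_dist_rpow hp hμ s).mono'
    (((continuous_rpow_c hp0).comp (continuous_infDist_pt S)).aestronglyMeasurable)
    (ae_of_all _ fun y => ?_)
  rw [Real.norm_eq_abs, abs_of_nonneg (Real.rpow_nonneg infDist_nonneg p)]
  exact Real.rpow_le_rpow infDist_nonneg (infDist_le_dist_of_mem hs) hp0

lemma integrable_dist_add_const_rpow {p : ℝ} (hp : 1 ≤ p) {μ : Measure X} [IsFiniteMeasure μ]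
    (hμ : FinMom p μ) (x0 : X) {c : ℝ} (hc : 0 ≤ c) :
    Integrable (fun y => (dist y x0 + c) ^ p) μ := by
  have hp0 : (0 : ℝ) ≤ p := by linarith
  have hcont : Continuous fun y : X => (dist y x0 + c) ^ p :=
    (continuous_rpow_c hp0).comp ((continuous_id.dist continuous_const).add continuous_const)
  refine Integrable.mono'
    (((integrable_dist_rpow hp hμ x0).add (integrable_const (c ^ p))).const_mul (2 ^ p))
    hcont.aestronglyMeasurable (ae_of_all _ fun y => ?_)
  simp only [Pi.add_apply]
  rw [Real.norm_eq_abs, abs_of_nonneg (Real.rpow_nonneg (by positivity) p)]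
  exact two_rpow_bound hp0 dist_nonneg hc

lemma Wp_nonneg (p : ℝ) (S : Set X) (μ : Measure X) : 0 ≤ Wp p S μ :=
  integral_nonneg fun _ => Real.rpow_nonneg infDist_nonneg p

lemma feas_singleton {k : ℕ} (hk : 1 ≤ k) {R : Set X} {x : X} (hx : x ∈ R) :
    Feas k R {x} :=
  ⟨singleton_subset_iff.2 hx, finite_singleton x, singleton_nonempty x, by
    simpa [Set.ncard_singleton] using hk⟩

lemma bddBelow_V (p : ℝ) (μ : Measure X) (k : ℕ) (R : Set X) :
    BddBelow ((fun S => Wp p S μ) '' {S | Feas k R S}) := by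
  refine ⟨0, ?_⟩
  rintro w ⟨T, _, rfl⟩
  exact Wp_nonneg p T μ

lemma mCost_le_Wp {p : ℝ} {μ : Measure X} {k : ℕ} {R S : Set X} (hS : Feas k R S) :
    mCost p μ k R ≤ Wp p S μ :=
  csInf_le (bddBelow_V p μ k R) ⟨S, hS, rfl⟩

lemma mCost_nonneg (p : ℝ) (μ : Measure X) (k : ℕ) (R : Set X) :
    0 ≤ mCost p μ k R := by
  refine Real.sInf_nonneg ?_
  rintro w ⟨T, _, rfl⟩
  exact Wp_nonneg p T μ

lemma mCost_anti {p : ℝ} {μ : Measure X} {j j' : ℕ} {R : Set X} (h1 : 1 ≤ j)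
    (hjj' : j ≤ j') (hRne : R.Nonempty) : mCost p μ j' R ≤ mCost p μ j R := by
  obtain ⟨x1, hx1⟩ := hRne
  refine csInf_le_csInf (bddBelow_V p μ j' R)
    ⟨_, ⟨{x1}, feas_singleton h1 hx1, rfl⟩⟩ ?_
  apply Set.image_mono
  rintro S ⟨h1', h2, h3, h4⟩
  exact ⟨h1', h2, h3, h4.trans hjj'⟩

lemma exists_near (p : ℝ) (μ : Measure X) {k : ℕ} {R : Set X} (hk : 1 ≤ k)
    (hRne : R.Nonempty) {δ : ℝ} (hδ : 0 < δ) :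
    ∃ S : Set X, Feas k R S ∧ Wp p S μ < mCost p μ k R + δ := by
  obtain ⟨x1, hx1⟩ := hRne
  obtain ⟨w, ⟨S, hS, rfl⟩, hlt⟩ :=
    Real.lt_sInf_add_pos (s := (fun S => Wp p S μ) '' {S | Feas k R S})
      ⟨_, ⟨{x1}, feas_singleton hk hx1, rfl⟩⟩ hδ
  exact ⟨S, hS, hlt⟩

lemma exists_tuple {S : Set X} (hfin : S.Finite) (hne : S.Nonempty) {k : ℕ}
    (hcard : S.ncard ≤ k) : ∃ x : Fin k → X, Set.range x = S := by
  obtain ⟨s₀, hs₀⟩ := hne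
  set l := hfin.toFinset.toList with hl
  have hlen : l.length = S.ncard := by
    rw [hl, Finset.length_toList, Set.ncard_eq_toFinset_card S hfin]
  have hmem : ∀ a, a ∈ l ↔ a ∈ S := fun a => by
    rw [hl, Finset.mem_toList, Set.Finite.mem_toFinset]
  refine ⟨fun i => l.getD i s₀, Set.eq_of_subset_of_subset ?_ ?_⟩
  · rintro a ⟨i, rfl⟩
    show l.getD (i : ℕ) s₀ ∈ S
    by_cases h : (i : ℕ) < l.length
    · rw [List.getD_eq_getElem _ _ h]
      exact (hmem _).1 (List.getElem_mem h)
    · rw [List.getD_eq_default _ _ (le_of_not_gt h)]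
      exact hs₀
  · intro a ha
    obtain ⟨i, hi, hia⟩ := List.getElem_of_mem ((hmem a).2 ha)
    refine ⟨⟨i, lt_of_lt_of_le hi (hlen ▸ hcard)⟩, ?_⟩
    show l.getD ((⟨i, _⟩ : Fin k) : ℕ) s₀ = a
    rw [Fin.val_mk, List.getD_eq_getElem _ _ hi]
    exact hia

lemma range_ncard_le {k : ℕ} (x : Fin k → X) : (Set.range x).ncard ≤ k := by
  classical
  rw [← Set.image_univ, ← Finset.coe_univ, ← Finset.coe_image, Set.ncard_coe_finset]
  simpa using Finset.card_image_le (s := Finset.univ) (f := x)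

/-- Localization: all sufficiently near-optimal feasible sets lie in a fixed ball. -/
lemma localization {p : ℝ} (hp : 1 ≤ p) (μ : Measure X) [IsProbabilityMeasure μ]
    (hμ : FinMom p μ) (x0 : X) {k : ℕ} (hk : 1 ≤ k) {R : Set X} (hRne : R.Nonempty)
    (hns : ∀ j : ℕ, 1 ≤ j → j < k → mCost p μ (j + 1) R < mCost p μ j R) :
    ∃ r δ : ℝ, 0 < δ ∧ 0 ≤ r ∧ ∀ S : Set X, Feas k R S →
      Wp p S μ < mCost p μ k R + δ → ∀ s ∈ S, dist s x0 ≤ r := by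
  have hp0 : (0 : ℝ) ≤ p := by linarith
  have hpne : p ≠ 0 := by positivity
  obtain ⟨m, hm⟩ : ∃ m : ℝ, m = mCost p μ k R := ⟨_, rfl⟩
  obtain ⟨ε, hε⟩ : ∃ ε : ℝ, ε = if 2 ≤ k then mCost p μ (k - 1) R - m else 1 := ⟨_, rfl⟩
  have hεpos : 0 < ε := by
    rw [hε]
    split_ifs with h2
    · have hns' := hns (k - 1) (by omega) (by omega)
      have hk1 : k - 1 + 1 = k := by omega
      rw [hk1] at hns'
      rw [hm]
      linarith
    · norm_num
  -- choose ρ₀ = n₀ with μ (ball x0 n₀) > 1/2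
  have hmono : Monotone fun n : ℕ => ball x0 (n : ℝ) := fun a b hab =>
    ball_subset_ball (by exact_mod_cast hab)
  have htend := tendsto_measure_iUnion_atTop (μ := μ) hmono
  rw [iUnion_ball_nat, measure_univ] at htend
  obtain ⟨n₀, hn₀⟩ := (htend.eventually (lt_mem_nhds (by norm_num : (1/2 : ENNReal) < 1))).exists
  have hB : (1/2 : ℝ) ≤ (μ (ball x0 (n₀ : ℝ))).toReal := by
    have := ENNReal.toReal_mono (measure_ne_top μ _) hn₀.le
    simpa using this
  have hm0 : 0 ≤ m := hm ▸ mCost_nonneg p μ k R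
  obtain ⟨c, hc⟩ : ∃ c : ℝ, c = 2 * (m + ε / 2) + 1 := ⟨_, rfl⟩
  have hcpos : 0 < c := by rw [hc]; linarith
  obtain ⟨r₀, hr₀⟩ : ∃ r₀ : ℝ, r₀ = (n₀ : ℝ) + c ^ p⁻¹ := ⟨_, rfl⟩
  have hcr : (c ^ p⁻¹) ^ p = c := by
    rw [← Real.rpow_mul hcpos.le, inv_mul_cancel₀ hpne, Real.rpow_one]

  have hcp0 : 0 ≤ c ^ p⁻¹ := Real.rpow_nonneg hcpos.le _
  have hr₀n : (n₀ : ℝ) ≤ r₀ := by rw [hr₀]; linarith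
  have hr₀0 : 0 ≤ r₀ := le_trans (Nat.cast_nonneg n₀) hr₀n
  -- Step 1: near-optimal sets have a point within r₀ of x0
  have step1 : ∀ S : Set X, Feas k R S → Wp p S μ < m + ε / 2 →
      ∃ t ∈ S, dist t x0 ≤ r₀ := by
    intro S hS hW
    by_contra hcon
    push_neg at hcon
    have hint := integrable_infDist_rpow hp hμ hS.2.2.1
    have hlow : ∀ y ∈ ball x0 (n₀ : ℝ), c ≤ infDist y S ^ p := by
      intro y hy
      have hyn : dist y x0 < n₀ := mem_ball.1 hy
      have h1 : c ^ p⁻¹ ≤ infDist y S := by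
        by_contra hlt
        push_neg at hlt
        obtain ⟨z, hz, hdz⟩ := (infDist_lt_iff hS.2.2.1).1 hlt
        have h2 := hcon z hz
        have h3 : dist z x0 ≤ dist z y + dist y x0 := dist_triangle z y x0
        rw [dist_comm z y] at h3
        rw [hr₀] at h2
        linarith
      calc c = (c ^ p⁻¹) ^ p := hcr.symm
        _ ≤ infDist y S ^ p := Real.rpow_le_rpow hcp0 h1 hp0
    have h2 : c * (μ (ball x0 (n₀ : ℝ))).toReal ≤ ∫ y in ball x0 (n₀ : ℝ), infDist y S ^ p ∂μ :=
      setIntegral_ge_of_const_le_real measurableSet_ball (measure_ne_top μ _) hlow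
        hint.integrableOn
    have h3 : ∫ y in ball x0 (n₀ : ℝ), infDist y S ^ p ∂μ ≤ Wp p S μ :=
      setIntegral_le_integral hint (ae_of_all _ fun y => Real.rpow_nonneg infDist_nonneg p)
    have h4 : c * (1/2) ≤ c * (μ (ball x0 (n₀ : ℝ))).toReal :=
      mul_le_mul_of_nonneg_left hB hcpos.le
    have hc2 : c * (1/2) = m + ε / 2 + 1/2 := by rw [hc]; ring
    nlinarith [h2, h3, h4, hc2, hW]
  -- choose the tail radius N
  set GG : X → ℝ := fun y => (dist y x0 + r₀) ^ p with hGGdef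
  have hGGint : Integrable GG μ := integrable_dist_add_const_rpow hp hμ x0 hr₀0
  have hGG0 : ∀ y, 0 ≤ GG y := fun y => Real.rpow_nonneg (by positivity) p
  obtain ⟨N, hN⟩ : ∃ N : ℕ, ∫ y in (ball x0 (N : ℝ))ᶜ, GG y ∂μ < ε / 2 := by
    have h4 := tendsto_setIntegral_of_monotone (μ := μ) (f := GG)
      (fun n : ℕ => measurableSet_ball) hmono
      (by rw [iUnion_ball_nat]; exact hGGint.integrableOn)
    rw [iUnion_ball_nat] at h4
    simp only [Measure.restrict_univ] at h4
    have h5 : Tendsto (fun n : ℕ => ∫ y in (ball x0 (n : ℝ))ᶜ, GG y ∂μ) atTop (𝓝 0) := by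
      have heq : (fun n : ℕ => ∫ y in (ball x0 (n : ℝ))ᶜ, GG y ∂μ) =
          fun n : ℕ => (∫ y, GG y ∂μ) - ∫ y in ball x0 (n : ℝ), GG y ∂μ := by
        funext n
        have := integral_add_compl (measurableSet_ball (x := x0) (ε := (n : ℝ))) hGGint
        linarith
      rw [heq]
      simpa using (tendsto_const_nhds (x := ∫ y, GG y ∂μ)).sub h4
    exact (h5.eventually (gt_mem_nhds (by positivity : (0:ℝ) < ε / 2))).exists
  refine ⟨2 * N + r₀, ε / 2, by positivity, by positivity, ?_⟩
  intro S hS hW s hsS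
  rw [← hm] at hW
  by_contra hfar
  push_neg at hfar
  obtain ⟨t, htS, htr⟩ := step1 S hS hW
  have hN0 : (0 : ℝ) ≤ N := Nat.cast_nonneg N
  have hts : t ≠ s := by
    intro h; rw [h] at htr; linarith
  have h2k : 2 ≤ k := by
    have h2 : 1 < S.ncard := (Set.one_lt_ncard hS.2.1).2 ⟨t, htS, s, hsS, hts⟩
    have h3 := hS.2.2.2
    omega
  have hεeq : mCost p μ (k - 1) R = m + ε := by
    rw [hε, if_pos h2k]; ring
  -- the set T = S \ {s}
  set T : Set X := S \ {s} with hT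
  have htT : t ∈ T := ⟨htS, by simp [hts]⟩
  have hTfeas : Feas (k - 1) R T := by
    refine ⟨Set.diff_subset.trans hS.1, hS.2.1.diff, ⟨t, htT⟩, ?_⟩
    rw [hT, Set.ncard_diff_singleton_of_mem hsS]
    have := hS.2.2.2
    omega
  have hmk1 : m + ε ≤ Wp p T μ := hεeq ▸ mCost_le_Wp hTfeas
  -- pointwise comparison
  have hpt : ∀ y, infDist y T ^ p ≤ infDist y S ^ p +
      Set.indicator (ball x0 (N : ℝ))ᶜ GG y := by
    intro y
    by_cases hy : y ∈ ball x0 (N : ℝ)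
    · rw [Set.indicator_of_notMem (by simpa using hy), add_zero]
      refine Real.rpow_le_rpow infDist_nonneg ?_ hp0
      -- infDist y T ≤ infDist y S
      refine le_of_not_gt fun hlt => ?_
      obtain ⟨z, hz, hdz⟩ := (infDist_lt_iff hS.2.2.1).1 hlt
      have hyN : dist y x0 < N := mem_ball.1 hy
      by_cases hzs : z = s
      · subst hzs
        have h1 : infDist y T ≤ dist y t := infDist_le_dist_of_mem htT
        have h2 : dist y t ≤ dist y x0 + dist x0 t := dist_triangle y x0 t
        rw [dist_comm x0 t] at h2
        have h3 : dist z x0 ≤ dist z y + dist y x0 := dist_triangle z y x0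
        rw [dist_comm z y] at h3
        linarith
      · exact absurd hdz (not_lt.2 (infDist_le_dist_of_mem ⟨hz, hzs⟩))
    · rw [Set.indicator_of_mem (by simpa using hy)]
      have h1 : infDist y T ≤ dist y x0 + r₀ := by
        refine le_trans (infDist_le_dist_of_mem htT) ?_
        have h2 : dist y t ≤ dist y x0 + dist x0 t := dist_triangle y x0 t
        rw [dist_comm x0 t] at h2
        linarith
      have h3 : infDist y T ^ p ≤ GG y := Real.rpow_le_rpow infDist_nonneg h1 hp0
      have h4 : 0 ≤ infDist y S ^ p := Real.rpow_nonneg infDist_nonneg p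
      linarith
  have hintT := integrable_infDist_rpow hp hμ hTfeas.2.2.1
  have hintS := integrable_infDist_rpow hp hμ hS.2.2.1
  have hindint : Integrable (Set.indicator (ball x0 (N : ℝ))ᶜ GG) μ :=
    hGGint.indicator measurableSet_ball.compl
  have h7 : Wp p T μ ≤ Wp p S μ + ∫ y in (ball x0 (N : ℝ))ᶜ, GG y ∂μ := by
    have h8 := integral_mono hintT (hintS.add hindint) hpt
    simp only [Pi.add_apply] at h8
    rwa [integral_add hintS hindint, integral_indicator measurableSet_ball.compl] at h8
  linarith

end Aux

/-- If `(μ,k,R)` is non-singular, then `C_p(μ,k,R)` is a nonempty compact subset of the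
hyperspace `K(X)` with the Hausdorff metric. -/
theorem stmt12 {X : Type*} [MetricSpace X] [ProperSpace X] [MeasurableSpace X] [BorelSpace X]
    (p : ℝ) (hp : 1 ≤ p) (μ : Measure X) [IsProbabilityMeasure μ] (hμ : FinMom p μ)
    (k : ℕ) (hk : 1 ≤ k) (R : Set X) (hRc : IsClosed R) (hRne : R.Nonempty)
    (hns : ∀ j : ℕ, 1 ≤ j → j < k → mCost p μ (j + 1) R < mCost p μ j R) :
    (Cp p μ k R).Nonempty ∧ IsCompact (Cp p μ k R) := by
  obtain ⟨x1, hx1⟩ := hRne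
  have hRne' : R.Nonempty := ⟨x1, hx1⟩
  have hp0 : (0 : ℝ) ≤ p := by linarith
  obtain ⟨r, δ, hδ, hr, hloc⟩ := localization hp μ hμ x1 hk hRne' hns
  have hVne : ((fun S => Wp p S μ) '' {S | Feas k R S}).Nonempty :=
    ⟨_, ⟨{x1}, feas_singleton hk hx1, rfl⟩⟩
  set K : Set X := closedBall x1 r ∩ R with hK
  have hKcomp : IsCompact K := (isCompact_closedBall x1 r).inter_right hRc
  have hKR : K ⊆ R := inter_subset_right
  have hSK : ∀ S : Set X, Feas k R S → Wp p S μ < mCost p μ k R + δ → S ⊆ K := by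
    intro S hS hW s hs
    exact ⟨mem_closedBall.2 (hloc S hS hW s hs), hS.1 hs⟩
  obtain ⟨S₀, hS₀f, hS₀W⟩ := exists_near p μ hk hRne' hδ
  obtain ⟨s₀, hs₀⟩ := hS₀f.2.2.1
  have hKne : K.Nonempty := ⟨s₀, hSK S₀ hS₀f hS₀W hs₀⟩
  obtain ⟨c₀, hc₀⟩ := hKne
  haveI : Nonempty (Fin k) := ⟨⟨0, hk⟩⟩
  set D : Set (Fin k → X) := {x | ∀ i, x i ∈ K} with hD
  have hDcomp : IsCompact D := by
    have hDpi : D = Set.pi univ (fun _ : Fin k => K) := by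
      ext x; simp [hD, Set.mem_pi]
    rw [hDpi]; exact isCompact_univ_pi fun _ => hKcomp
  have hDne : D.Nonempty := ⟨fun _ => c₀, fun _ => hc₀⟩
  set g : (Fin k → X) → ℝ := fun x => Wp p (Set.range x) μ with hg
  -- Lipschitz-type bound for infDist of ranges
  have hlip : ∀ (x x' : Fin k → X) (y : X),
      infDist y (Set.range x) ≤ infDist y (Set.range x') + dist x x' := by
    intro x x' y
    have hstep : ∀ z ∈ Set.range x', infDist y (Set.range x) - dist x x' ≤ dist y z := by
      rintro z ⟨i, rfl⟩
      have h1 : infDist y (Set.range x) ≤ dist y (x i) :=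
        infDist_le_dist_of_mem (mem_range_self i)
      have h2 : dist y (x i) ≤ dist y (x' i) + dist (x' i) (x i) := dist_triangle y (x' i) (x i)
      have h3 : dist (x' i) (x i) ≤ dist x' x := dist_le_pi_dist x' x i
      rw [dist_comm x' x] at h3
      linarith
    refine le_of_not_gt fun hlt => ?_
    have h4 : infDist y (Set.range x') < infDist y (Set.range x) - dist x x' := by linarith
    obtain ⟨z, hz, hdz⟩ := (infDist_lt_iff (range_nonempty x')).1 h4
    exact absurd hdz (not_lt.2 (hstep z hz))
  -- continuity of the tuple cost on D
  have hgcont : ContinuousOn g D := by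
    rw [continuousOn_iff_continuous_restrict]
    apply SeqContinuous.continuous
    intro u x hux
    have hd0 : Tendsto (fun n => dist ((u n) : Fin k → X) (x : Fin k → X)) atTop (𝓝 0) := by
      have h1 : Tendsto (fun n => ((u n) : Fin k → X)) atTop (𝓝 (x : Fin k → X)) :=
        ((continuous_subtype_val.tendsto x).comp hux)
      rwa [tendsto_iff_dist_tendsto_zero] at h1
    show Tendsto (fun n => g ((u n) : Fin k → X)) atTop (𝓝 (g (x : Fin k → X)))
    refine tendsto_integral_of_dominated_convergence (fun y => (dist y x1 + r) ^ p)
      (fun n => ((continuous_rpow_c hp0).comp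
        (continuous_infDist_pt _)).aestronglyMeasurable)
      (integrable_dist_add_const_rpow hp hμ x1 hr) (fun n => ae_of_all _ fun y => ?_)
      (ae_of_all _ fun y => ?_)
    · rw [Real.norm_eq_abs, abs_of_nonneg (Real.rpow_nonneg infDist_nonneg p)]
      refine Real.rpow_le_rpow infDist_nonneg ?_ hp0
      have hi : ((u n) : Fin k → X) ⟨0, hk⟩ ∈ K := (u n).2 ⟨0, hk⟩
      have hi2 : dist (((u n) : Fin k → X) ⟨0, hk⟩) x1 ≤ r := mem_closedBall.1 hi.1
      calc infDist y (Set.range ((u n) : Fin k → X))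
          ≤ dist y (((u n) : Fin k → X) ⟨0, hk⟩) :=
            infDist_le_dist_of_mem (mem_range_self _)
        _ ≤ dist y x1 + dist x1 (((u n) : Fin k → X) ⟨0, hk⟩) := dist_triangle _ _ _
        _ ≤ dist y x1 + r := by rw [dist_comm x1]; linarith
    · have hsq : Tendsto (fun n => infDist y (Set.range ((u n) : Fin k → X))) atTop
          (𝓝 (infDist y (Set.range (x : Fin k → X)))) := by
        refine tendsto_of_tendsto_of_tendsto_of_le_of_le
          (g := fun n => infDist y (Set.range (x : Fin k → X))
            - dist ((u n) : Fin k → X) (x : Fin k → X))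
          (h := fun n => infDist y (Set.range (x : Fin k → X))
            + dist ((u n) : Fin k → X) (x : Fin k → X)) ?_ ?_ ?_ ?_
        · simpa using
            (tendsto_const_nhds (x := infDist y (Set.range (x : Fin k → X)))).sub hd0
        · simpa using
            (tendsto_const_nhds (x := infDist y (Set.range (x : Fin k → X)))).add hd0
        · intro n
          dsimp only
          have := hlip (x : Fin k → X) ((u n) : Fin k → X) y
          rw [dist_comm (x : Fin k → X)] at this
          linarith
        · intro n
          dsimp only
          exact hlip ((u n) : Fin k → X) (x : Fin k → X) y
      exact (((continuous_rpow_c hp0).tendsto _).comp hsq)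
  have hfeasD : ∀ x : Fin k → X, x ∈ D → Feas k R (Set.range x) := fun x hx =>
    ⟨range_subset_iff.2 fun i => hKR (hx i), finite_range x, range_nonempty x,
      range_ncard_le x⟩
  obtain ⟨xs, hxsD, hminOn⟩ := hDcomp.exists_isMinOn hDne hgcont
  have hmin : ∀ z ∈ D, g xs ≤ g z := isMinOn_iff.1 hminOn
  -- the minimum over D equals the optimal cost
  have hge : mCost p μ k R ≤ g xs := mCost_le_Wp (hfeasD xs hxsD)
  have hle : g xs ≤ mCost p μ k R := by
    by_contra hgt
    push_neg at hgt
    have hδ' : 0 < min ((g xs - mCost p μ k R) / 2) δ :=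
      lt_min (by linarith) hδ
    obtain ⟨S, hSf, hSW⟩ := exists_near p μ hk hRne' hδ'
    have hWδ : Wp p S μ < mCost p μ k R + δ :=
      lt_of_lt_of_le hSW (by have := min_le_right ((g xs - mCost p μ k R) / 2) δ; linarith)
    have hSK' := hSK S hSf hWδ
    obtain ⟨xS, hxS⟩ := exists_tuple hSf.2.1 hSf.2.2.1 hSf.2.2.2
    have hxSD : xS ∈ D := fun i => hSK' (hxS ▸ mem_range_self i)
    have h1 : g xs ≤ g xS := hmin xS hxSD
    have h2 : g xS = Wp p S μ := by rw [hg]; simp only []; rw [hxS]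
    have h3 := min_le_left ((g xs - mCost p μ k R) / 2) δ
    linarith
  have hstar : g xs = mCost p μ k R := le_antisymm hle hge
  -- the set of minimizing tuples is compact
  have hMcomp : IsCompact (D ∩ g ⁻¹' {mCost p μ k R}) := by
    have hrep : D ∩ g ⁻¹' {mCost p μ k R} =
        Subtype.val '' ((D.restrict g) ⁻¹' {mCost p μ k R}) := by
      ext x
      constructor
      · rintro ⟨hxD, hxm⟩; exact ⟨⟨x, hxD⟩, hxm, rfl⟩
      · rintro ⟨⟨x', hx'⟩, hx'm, rfl⟩; exact ⟨hx', hx'm⟩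
    rw [hrep]
    haveI := isCompact_iff_compactSpace.mp hDcomp
    have hcl : IsClosed ((D.restrict g) ⁻¹' {mCost p μ k R}) :=
      isClosed_singleton.preimage (continuousOn_iff_continuous_restrict.mp hgcont)
    exact hcl.isCompact.image continuous_subtype_val
  -- the map from tuples to nonempty compact sets
  set Φ : (Fin k → X) → NonemptyCompacts X :=
    fun x => ⟨⟨Set.range x, (finite_range x).isCompact⟩, range_nonempty x⟩ with hΦ
  have hΦlip : LipschitzWith 1 Φ := by
    apply LipschitzWith.of_dist_le_mul
    intro x x'
    simp only [NNReal.coe_one, one_mul]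
    have hdd : dist (Φ x) (Φ x') = hausdorffDist (Set.range x) (Set.range x') := rfl
    rw [hdd]
    apply hausdorffDist_le_of_infDist dist_nonneg
    · rintro z ⟨i, rfl⟩
      exact le_trans (infDist_le_dist_of_mem (mem_range_self i)) (dist_le_pi_dist x x' i)
    · rintro z ⟨i, rfl⟩
      rw [dist_comm x x']
      exact le_trans (infDist_le_dist_of_mem (mem_range_self i)) (dist_le_pi_dist x' x i)
  -- identification of Cp with the image of the minimizing tuples
  have hCpEq : Cp p μ k R = Φ '' (D ∩ g ⁻¹' {mCost p μ k R}) := by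
    ext A
    constructor
    · rintro ⟨hAf, hAmin⟩
      have hup : Wp p (A : Set X) μ ≤ mCost p μ k R :=
        le_csInf hVne (by rintro w ⟨T, hT, rfl⟩; exact hAmin T hT)
      have hAW : Wp p (A : Set X) μ = mCost p μ k R := le_antisymm hup (mCost_le_Wp hAf)
      have hAK : (A : Set X) ⊆ K := hSK _ hAf (by rw [hAW]; linarith)
      obtain ⟨x, hx⟩ := exists_tuple hAf.2.1 hAf.2.2.1 hAf.2.2.2
      refine ⟨x, ⟨fun i => hAK (hx ▸ mem_range_self i), ?_⟩, ?_⟩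
      · show g x ∈ ({mCost p μ k R} : Set ℝ)
        rw [mem_singleton_iff]
        show Wp p (Set.range x) μ = mCost p μ k R
        rw [hx]; exact hAW
      · apply NonemptyCompacts.ext
        exact hx
    · rintro ⟨x, ⟨hxD, hxm⟩, rfl⟩
      have hxm' : Wp p (Set.range x) μ = mCost p μ k R := hxm
      refine ⟨hfeasD x hxD, fun T hT => ?_⟩
      show Wp p (Set.range x) μ ≤ Wp p T μ
      rw [hxm']
      exact mCost_le_Wp hT
  refine ⟨?_, ?_⟩
  · rw [hCpEq]
    exact ⟨Φ xs, ⟨xs, ⟨hxsD, hstar⟩, rfl⟩⟩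
  · rw [hCpEq]
    exact hMcomp.image hΦlip.continuous
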